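/- arXiv:2507.14370 — 3 statements merged into one kernel-verified Lean document; each statement's English description precedes it below -/
import Mathlib

section
/- Let π be a unitary permutation matrix in the third level of the Clifford Hierarchy and let d be a diagonal unitary matrix. Then πd is in the third level of the Clifford Hierarchy if and only if for every Pauli X string X⃗, the matrix π X⃗ d X⃗ d⁻¹ π⁻¹ is a Clifford unitary. -/
/-- Basis states of `n` qubits. -/
abbrev QState (n : ℕ) := Fin n → ZMod 2

/-- `2^n × 2^n` complex matrices, indexed by basis states of `n` qubits. -/
abbrev QMat (n : ℕ) := Matrix (QState n) (QState n) ℂ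

noncomputable section

namespace CHPaper

/-- Pauli X string: the permutation matrix adding the vector `v` (bit flips). -/
def XStr {n : ℕ} (v : QState n) : QMat n :=
  Matrix.of fun x y => if x = y + v then (1 : ℂ) else 0

/-- Pauli Z string: diagonal sign matrix determined by the vector `v`. -/
def ZStr {n : ℕ} (v : QState n) : QMat n :=
  Matrix.diagonal fun x => (-1 : ℂ) ^ (ZMod.val (∑ i, v i * x i))

/-- The `n`-qubit Pauli group (with phases that are fourth roots of unity). -/
def Pauli (n : ℕ) : Set (QMat n) :=
  {M | ∃ (c : ℂ) (v w : QState n), c ^ 4 = 1 ∧ M = c • (XStr v * ZStr w)}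

/-- The Clifford Hierarchy: level 1 is the Pauli group, and
`U ∈ CH n (k+1)` iff `U` is unitary and conjugates every Pauli into `CH n k`. -/
def CH (n : ℕ) : ℕ → Set (QMat n)
  | 0 => {1}
  | 1 => Pauli n
  | (k+2) => {U | U ∈ Matrix.unitaryGroup (QState n) ℂ ∧
      ∀ P ∈ Pauli n, U * P * star U ∈ CH n (k+1)}

/-- Membership in some finite level of the Clifford Hierarchy. -/
def InCH {n : ℕ} (M : QMat n) : Prop := ∃ k, M ∈ CH n k

/-- The permutation matrix of a permutation of basis states. -/
def permMat {n : ℕ} (σ : Equiv.Perm (QState n)) : QMat n :=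
  Matrix.of fun x y => if x = σ y then (1 : ℂ) else 0

/-- A matrix is a permutation matrix. -/
def IsPermMat {n : ℕ} (M : QMat n) : Prop :=
  ∃ σ : Equiv.Perm (QState n), M = permMat σ

/-- A monomial (generalized permutation) matrix: exactly one nonzero entry in
each row and column. -/
def IsMonomial {n : ℕ} (M : QMat n) : Prop :=
  ∃ (σ : Equiv.Perm (QState n)) (d : QState n → ℂ), (∀ x, d x ≠ 0) ∧
    M = Matrix.of fun x y => if x = σ y then d y else 0

/-! ### Auxiliary lemmas -/

lemma mem_CH2_iff {n : ℕ} (U : QMat n) : U ∈ CH n 2 ↔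
    U ∈ Matrix.unitaryGroup (QState n) ℂ ∧ ∀ P ∈ Pauli n, U * P * star U ∈ Pauli n := Iff.rfl

lemma mem_CH3_iff {n : ℕ} (U : QMat n) : U ∈ CH n 3 ↔
    U ∈ Matrix.unitaryGroup (QState n) ℂ ∧ ∀ P ∈ Pauli n, U * P * star U ∈ CH n 2 := Iff.rfl

lemma qadd_self {n : ℕ} (v : QState n) : v + v = 0 := by
  funext i
  have h : ∀ a : ZMod 2, a + a = 0 := by decide
  exact h (v i)

lemma XStr_zero {n : ℕ} : (XStr (0 : QState n)) = 1 := by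
  ext x y
  simp [XStr, Matrix.one_apply]

lemma ZStr_zero {n : ℕ} : (ZStr (0 : QState n)) = 1 := by
  unfold ZStr
  simp [Matrix.diagonal_one]

lemma XStr_mul_self {n : ℕ} (v : QState n) : XStr v * XStr v = 1 := by
  ext x y
  have hc : ∀ z : QState n, (x = z + v) ↔ (z = x + v) := by
    intro z
    constructor
    · intro h; rw [h, add_assoc, qadd_self, add_zero]
    · intro h; rw [h, add_assoc, qadd_self, add_zero]
  simp only [XStr, Matrix.mul_apply, Matrix.of_apply, Matrix.one_apply]
  rw [Finset.sum_congr rfl (fun z _ => by rw [if_congr (hc z) rfl rfl])]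
  simp only [ite_mul, one_mul, zero_mul]
  rw [Finset.sum_ite_eq' Finset.univ (x + v) (fun z => if z = y + v then (1:ℂ) else 0)]
  simp only [Finset.mem_univ, if_true]
  by_cases h : x = y
  · simp [h]
  · have : ¬ (x + v = y + v) := fun hh => h (by
      have := congrArg (· + v) hh
      simpa [add_assoc, qadd_self] using this)
    simp [h, this]

lemma XStr_mem_Pauli {n : ℕ} (v : QState n) : XStr v ∈ Pauli n :=
  ⟨1, v, 0, by norm_num, by simp [ZStr_zero]⟩

lemma ZStr_mem_Pauli {n : ℕ} (w : QState n) : ZStr w ∈ Pauli n :=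
  ⟨1, 0, w, by norm_num, by simp [XStr_zero]⟩

lemma ZStr_isDiag {n : ℕ} (w : QState n) : (ZStr w).IsDiag := Matrix.isDiag_diagonal _

lemma diag_comm {n : ℕ} {A B : QMat n} (hA : A.IsDiag) (hB : B.IsDiag) : A * B = B * A := by
  rw [← hA.diagonal_diag, ← hB.diagonal_diag, Matrix.diagonal_mul_diagonal,
    Matrix.diagonal_mul_diagonal]
  have h : (fun i => Matrix.diag A i * Matrix.diag B i)
      = fun i => Matrix.diag B i * Matrix.diag A i := by
    funext i; exact mul_comm (A.diag i) (B.diag i)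
  rw [h]

lemma CH2_mul {n : ℕ} {U V : QMat n} (hU : U ∈ CH n 2) (hV : V ∈ CH n 2) :
    U * V ∈ CH n 2 := by
  obtain ⟨hU1, hU2⟩ := hU
  obtain ⟨hV1, hV2⟩ := hV
  refine ⟨mul_mem hU1 hV1, fun P hP => ?_⟩
  have h : U * V * P * star (U * V) = U * (V * P * star V) * star U := by
    rw [star_mul]
    simp only [mul_assoc]
  rw [h]
  exact hU2 _ (hV2 P hP)

lemma conj_mul_self_eq_one {c : ℂ} (hc : c ^ 4 = 1) : c * star c = 1 := by
  have h1 : ‖c‖ = 1 := Complex.norm_eq_one_of_pow_eq_one hc (by norm_num)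
  have h3 : Complex.normSq c = 1 := by
    rw [Complex.normSq_eq_norm_sq, h1, one_pow]
  calc c * star c = (Complex.normSq c : ℂ) := by
        rw [Complex.star_def, Complex.mul_conj]
    _ = 1 := by rw [h3]; norm_num

lemma CH2_smul {n : ℕ} {c : ℂ} (hc : c ^ 4 = 1) {M : QMat n} (hM : M ∈ CH n 2) :
    c • M ∈ CH n 2 := by
  obtain ⟨hM1, hM2⟩ := hM
  have hcc : c * star c = 1 := conj_mul_self_eq_one hc
  constructor
  · rw [Matrix.mem_unitaryGroup_iff] at hM1 ⊢
    rw [star_smul, Matrix.smul_mul, Matrix.mul_smul, smul_smul, hM1, hcc, one_smul]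
  · intro P hP
    have h : c • M * P * star (c • M) = (star c * c) • (M * P * star M) := by
      rw [star_smul]
      simp only [Matrix.smul_mul, Matrix.mul_smul, smul_smul]
    rw [mul_comm] at hcc
    rw [h, hcc, one_smul]
    exact hM2 P hP

/-- for a permutation matrix π in CH₃ and a diagonal unitary d,
π d is in CH₃ iff π X⃗ d X⃗ d⁻¹ π⁻¹ is Clifford for every Pauli X string X⃗. -/
theorem perm_mul_diag_mem_CH3_iff {n : ℕ}
    (π d : QMat n) (hπ : IsPermMat π) (hπ3 : π ∈ CH n 3)
    (hd : d.IsDiag) (hdu : d ∈ Matrix.unitaryGroup (QState n) ℂ) :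
    π * d ∈ CH n 3 ↔
      ∀ v : QState n, π * XStr v * d * XStr v * d⁻¹ * π⁻¹ ∈ CH n 2 := by
  obtain ⟨hπu, hπ2⟩ := (mem_CH3_iff π).mp hπ3
  have hπs : π * star π = 1 := Matrix.mem_unitaryGroup_iff.mp hπu
  have hsπ : star π * π = 1 := Matrix.mem_unitaryGroup_iff'.mp hπu
  have hds : d * star d = 1 := Matrix.mem_unitaryGroup_iff.mp hdu
  have hπinv : π⁻¹ = star π := Matrix.inv_eq_right_inv hπs
  have hdinv : d⁻¹ = star d := Matrix.inv_eq_right_inv hds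
  have cancel : ∀ A : QMat n, star π * (π * A) = A := fun A => by
    rw [← mul_assoc, hsπ, one_mul]
  constructor
  · intro hpd v
    obtain ⟨hpdu, hpd2⟩ := (mem_CH3_iff _).mp hpd
    have h1 : π * XStr v * star π ∈ CH n 2 := hπ2 _ (XStr_mem_Pauli v)
    have h2 : π * d * XStr v * star (π * d) ∈ CH n 2 := hpd2 _ (XStr_mem_Pauli v)
    have key : π * XStr v * d * XStr v * d⁻¹ * π⁻¹
        = (π * XStr v * star π) * (π * d * XStr v * star (π * d)) := by
      rw [hπinv, hdinv, star_mul]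
      simp only [mul_assoc]
      rw [cancel]
    rw [key]
    exact CH2_mul h1 h2
  · intro h
    refine (mem_CH3_iff _).mpr ⟨mul_mem hπu hdu, ?_⟩
    rintro P ⟨c, v, w, hc, rfl⟩
    have hx : ∀ A : QMat n, XStr v * (XStr v * A) = A := fun A => by
      rw [← mul_assoc, XStr_mul_self, one_mul]
    have hzd : ∀ A : QMat n, ZStr w * (star d * A) = star d * (ZStr w * A) := fun A => by
      rw [← mul_assoc, Matrix.star_eq_conjTranspose,
        diag_comm (ZStr_isDiag w) hd.conjTranspose, mul_assoc]
    have key : π * d * (c • (XStr v * ZStr w)) * star (π * d)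
        = c • ((π * XStr v * star π) * (π * XStr v * d * XStr v * d⁻¹ * π⁻¹)
            * (π * ZStr w * star π)) := by
      rw [hπinv, hdinv, star_mul]
      simp only [Matrix.smul_mul, Matrix.mul_smul, mul_assoc]
      congr 1
      rw [cancel, hx, cancel, hzd]
    rw [key]
    exact CH2_smul hc
      (CH2_mul (CH2_mul (hπ2 _ (XStr_mem_Pauli v)) (h v)) (hπ2 _ (ZStr_mem_Pauli w)))

end CHPaper
end
end

section
/- Let π be a permutation matrix that is a product of multi-controlled-NOT gates, let T be the set of qubit wires containing a target of π, and let d_T̄ be a diagonal gate supported only on wires outside T with d_T̄ in the third level of the Clifford Hierarchy. Then for any diagonal gate d_T supported on arbitrary wires, π d_T d_T̄ is in level k of the Clifford Hierarchy if and only if π d_T is in level k, for any k ≥ 3. In particular, π d_T d_T̄ X⃗ d_T̄⁻¹ d_T⁻¹ π⁻¹ = (d_T̄ X⃗ d_T̄⁻¹ X⃗)·(π d_T X⃗ d_T⁻¹ π⁻¹) for every Pauli X string X⃗. -/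
noncomputable section

namespace CHPaper

variable {n : ℕ}

lemma permMat_mul (σ τ : Equiv.Perm (QState n)) :
    permMat σ * permMat τ = permMat (σ * τ) := by
  ext x y
  simp only [permMat, Matrix.mul_apply, Matrix.of_apply]
  rw [Finset.sum_eq_single (τ y)]
  · simp [Equiv.Perm.mul_apply]; exact if_congr Iff.rfl rfl rfl
  · intro z _ hz
    simp [hz]
  · simp

lemma permMat_one : permMat (1 : Equiv.Perm (QState n)) = 1 := by
  ext x y
  simp [permMat, Matrix.one_apply]; exact if_congr Iff.rfl rfl rfl

lemma star_permMat (σ : Equiv.Perm (QState n)) :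
    star (permMat σ) = permMat σ⁻¹ := by
  ext x y
  simp only [Matrix.star_apply, permMat, Matrix.of_apply]
  have : (y = σ x) ↔ (x = σ⁻¹ y) := by constructor <;> (intro h; simp [h])
  rw [if_congr this rfl rfl]
  split <;> simp

lemma permMat_mem (σ : Equiv.Perm (QState n)) :
    permMat σ ∈ Matrix.unitaryGroup (QState n) ℂ := by
  rw [Matrix.mem_unitaryGroup_iff, star_permMat, permMat_mul]
  simp [permMat_one]

lemma permMat_inv (σ : Equiv.Perm (QState n)) :
    (permMat σ)⁻¹ = permMat σ⁻¹ := by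
  apply Matrix.inv_eq_right_inv
  rw [permMat_mul]; simp [permMat_one]

lemma permMat_mul_diag (σ : Equiv.Perm (QState n)) (d : QState n → ℂ) :
    permMat σ * Matrix.diagonal d = Matrix.diagonal (fun x => d (σ⁻¹ x)) * permMat σ := by
  ext x y
  simp only [Matrix.mul_apply, permMat, Matrix.of_apply, Matrix.diagonal_apply]
  rw [Finset.sum_eq_single y, Finset.sum_eq_single x]
  · rcases eq_or_ne x (σ y) with h | h
    · simp [h]
    · simp [h]
  · intro z _ hz; simp [Ne.symm hz]
  · simp
  · intro z _ hz; simp [hz]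
  · simp

end CHPaper

namespace CHPaper
variable {n : ℕ}

lemma qstate_add_self (v : QState n) : v + v = 0 := by
  funext i; exact CharTwo.add_self_eq_zero _

lemma xstr_eq_perm (v : QState n) : XStr v = permMat (Equiv.addRight v) := rfl

lemma addRight_inv (v : QState n) :
    (Equiv.addRight v)⁻¹ = Equiv.addRight v := by
  ext x
  simp [Equiv.Perm.inv_def, CharTwo.neg_eq]

lemma xstr_mul_self (v : QState n) : XStr v * XStr v = 1 := by
  rw [xstr_eq_perm, permMat_mul]
  nth_rewrite 1 [← addRight_inv]
  rw [inv_mul_cancel, permMat_one]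

lemma star_xstr (v : QState n) : star (XStr v) = XStr v := by
  rw [xstr_eq_perm, star_permMat, addRight_inv]

lemma xstr_mem (v : QState n) : XStr v ∈ Matrix.unitaryGroup (QState n) ℂ := by
  rw [xstr_eq_perm]; exact permMat_mem _

lemma xstr_inv (v : QState n) : (XStr v)⁻¹ = XStr v := by
  exact Matrix.inv_eq_right_inv (xstr_mul_self v)

lemma xstr_comm (v u : QState n) : XStr v * XStr u = XStr u * XStr v := by
  simp only [xstr_eq_perm, permMat_mul]
  apply congrArg permMat
  apply Equiv.ext
  intro x
  rw [Equiv.Perm.mul_apply, Equiv.Perm.mul_apply]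
  simp only [Equiv.coe_addRight]
  exact add_right_comm x u v

lemma xstr_mul_diag (v : QState n) (d : QState n → ℂ) :
    XStr v * Matrix.diagonal d = Matrix.diagonal (fun x => d (x + v)) * XStr v := by
  rw [xstr_eq_perm, permMat_mul_diag, addRight_inv]
  rfl

-- unitary helpers
lemma inv_of_unitary {M : QMat n} (h : M ∈ Matrix.unitaryGroup (QState n) ℂ) :
    M⁻¹ = star M :=
  Matrix.inv_eq_right_inv (Matrix.mem_unitaryGroup_iff.mp h)

lemma diag_star_diag {M : QMat n} (h : M.IsDiag) : (star M).IsDiag := by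
  intro i j hij
  have := h hij.symm
  simp [Matrix.star_apply, this]

lemma diag_comm_s3 {M N : QMat n} (hM : M.IsDiag) (hN : N.IsDiag) : M * N = N * M := by
  rw [← hM.diagonal_diag, ← hN.diagonal_diag, Matrix.diagonal_mul_diagonal,
    Matrix.diagonal_mul_diagonal]
  apply congrArg Matrix.diagonal
  funext i
  exact mul_comm (Matrix.diag M i) (Matrix.diag N i)

end CHPaper

namespace CHPaper
variable {n : ℕ}

lemma neg_one_pow_mod (m : ℕ) : ((-1 : ℂ)) ^ m = (-1) ^ (m % 2) := by
  conv_lhs => rw [← Nat.div_add_mod m 2]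
  rw [pow_add, pow_mul]
  norm_num

lemma neg_one_pow_val_add (a b : ZMod 2) :
    ((-1 : ℂ)) ^ (a + b).val = (-1) ^ a.val * (-1) ^ b.val := by
  have h : ((a + b).val) % 2 = (a.val + b.val) % 2 := by
    have h : ∀ a b : ZMod 2, ((a + b).val) % 2 = (a.val + b.val) % 2 := by decide
    exact h a b
  rw [neg_one_pow_mod (a+b).val, h, ← neg_one_pow_mod, pow_add]

lemma zstr_zero : ZStr (0 : QState n) = 1 := by
  unfold ZStr
  simp [Matrix.diagonal_one]

lemma zstr_isDiag (w : QState n) : (ZStr w).IsDiag := Matrix.isDiag_diagonal _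

lemma xstr_pauli (v : QState n) : XStr v ∈ Pauli n :=
  ⟨1, v, 0, by norm_num, by rw [zstr_zero, mul_one, one_smul]⟩

lemma xstr_conj_zstr (v w : QState n) :
    XStr v * ZStr w * XStr v =
      ((-1 : ℂ) ^ (ZMod.val (∑ i, w i * v i))) • ZStr w := by
  unfold ZStr
  rw [xstr_mul_diag, mul_assoc, xstr_mul_self, mul_one]
  rw [← Matrix.diagonal_smul]
  apply congrArg Matrix.diagonal
  funext x
  have : (∑ i, w i * (x + v) i) = (∑ i, w i * x i) + (∑ i, w i * v i) := by
    rw [← Finset.sum_add_distrib]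
    apply Finset.sum_congr rfl
    intro i _
    show w i * (x i + v i) = _
    ring
  rw [this, neg_one_pow_val_add]
  simp [mul_comm]

lemma star_zstr (w : QState n) : star (ZStr w) = ZStr w := by
  unfold ZStr
  rw [Matrix.star_eq_conjTranspose, Matrix.diagonal_conjTranspose]
  apply congrArg Matrix.diagonal
  funext x
  show star ((-1:ℂ) ^ (ZMod.val (∑ i, w i * x i))) = _
  rw [star_pow]
  norm_num

lemma zstr_mul_self (w : QState n) : ZStr w * ZStr w = 1 := by
  unfold ZStr
  rw [Matrix.diagonal_mul_diagonal]
  rw [← Matrix.diagonal_one]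
  apply congrArg Matrix.diagonal
  funext x
  rw [← pow_add, neg_one_pow_mod, ← two_mul, Nat.mul_mod_right, pow_zero]


end CHPaper

namespace CHPaper
variable {n : ℕ}

lemma CH2_def : CH n 2 = {U | U ∈ Matrix.unitaryGroup (QState n) ℂ ∧
    ∀ P ∈ Pauli n, U * P * star U ∈ CH n 1} := rfl

lemma CH1_def : CH n 1 = Pauli n := rfl

lemma xstr_conj_pauli (v : QState n) {P : QMat n} (hP : P ∈ Pauli n) :
    XStr v * P * star (XStr v) ∈ Pauli n := by
  obtain ⟨c, u, w, hc, rfl⟩ := hP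
  rw [star_xstr]
  refine ⟨c * (-1 : ℂ) ^ (ZMod.val (∑ i, w i * v i)), u, w, ?_, ?_⟩
  · rw [mul_pow, hc, one_mul, ← pow_mul, mul_comm (ZMod.val _) 4, pow_mul]
    norm_num
  · rw [Matrix.mul_smul, Matrix.smul_mul]
    rw [show XStr v * (XStr u * ZStr w) * XStr v = XStr u * (XStr v * ZStr w * XStr v) by
      simp only [← mul_assoc]
      rw [xstr_comm v u]]
    rw [xstr_conj_zstr, mul_smul_comm, smul_smul, mul_comm c]

lemma xstr_CH2 (v : QState n) : XStr v ∈ CH n 2 := by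
  rw [CH2_def]
  exact ⟨xstr_mem v, fun P hP => xstr_conj_pauli v hP⟩

lemma pauli_finite : (Pauli n).Finite := by
  have h4 : ({c : ℂ | c ^ 4 = 1}).Finite := by
    apply Set.Finite.subset (Polynomial.nthRoots 4 (1 : ℂ)).toFinset.finite_toSet
    intro c hc
    rw [Set.mem_setOf_eq] at hc
    simp only [Finset.coe_sort_coe, Multiset.mem_toFinset, Finset.mem_coe]
    rw [Polynomial.mem_nthRoots (by norm_num : 0 < 4)]
    exact hc
  have hsub : Pauli n ⊆
      (fun p : ℂ × QState n × QState n => p.1 • (XStr p.2.1 * ZStr p.2.2)) ''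
        ({c : ℂ | c ^ 4 = 1} ×ˢ (Set.univ : Set (QState n × QState n))) := by
    rintro M ⟨c, v, w, hc, rfl⟩
    exact ⟨⟨c, v, w⟩, ⟨hc, Set.mem_univ _⟩, rfl⟩
  exact Set.Finite.subset ((h4.prod Set.finite_univ).image _) hsub

lemma sandwich {C P : QMat n} (hCs : star C * C = 1) (hCC : C * star C = 1) :
    star C * (C * P * star C) * C = P := by
  calc star C * (C * P * star C) * C
      = (star C * C) * (P * (star C * C)) := by simp only [mul_assoc]
    _ = P := by rw [hCs, one_mul, mul_one]

lemma CH2_star {C : QMat n} (hC : C ∈ CH n 2) : star C ∈ CH n 2 := by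
  rw [CH2_def] at hC ⊢
  obtain ⟨hu, hp⟩ := hC
  have hCs : star C * C = 1 := Matrix.mem_unitaryGroup_iff'.mp hu
  have hCC : C * star C = 1 := Matrix.mem_unitaryGroup_iff.mp hu
  refine ⟨Unitary.star_mem hu, fun Q hQ => ?_⟩
  have hmaps : Set.MapsTo (fun P => C * P * star C) (Pauli n) (Pauli n) := fun P hP => hp P hP
  have hinj : Set.InjOn (fun P => C * P * star C) (Pauli n) := by
    intro P _ P' _ h
    simp only at h
    have h2 := congrArg (fun M => star C * M * C) h
    rwa [sandwich hCs hCC, sandwich hCs hCC] at h2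
  have hbij := (pauli_finite.injOn_iff_bijOn_of_mapsTo hmaps).mp hinj
  obtain ⟨P, hP, hPQ⟩ := hbij.surjOn hQ
  simp only at hPQ
  rw [star_star]
  have : star C * Q * C = P := by
    rw [← hPQ, sandwich hCs hCC]
  rw [this]
  exact hP

end CHPaper

namespace CHPaper
variable {n : ℕ}

lemma conj_eq {C M P : QMat n} :
    (C * M * star C) * P * star (C * M * star C) =
      C * (M * (star C * P * C) * star M) * star C := by
  rw [star_mul, star_mul, star_star]
  simp only [mul_assoc]

lemma CH_conj : ∀ (m : ℕ) {C M : QMat n}, C ∈ CH n 2 → star C ∈ CH n 2 →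
    M ∈ CH n m → C * M * star C ∈ CH n m
  | 0, C, M, hC, _, hM => by
      have hM1 : M = 1 := hM
      subst hM1
      show C * 1 * star C ∈ ({1} : Set (QMat n))
      rw [mul_one, Matrix.mem_unitaryGroup_iff.mp hC.1]
      rfl
  | 1, C, M, hC, _, hM => hC.2 M hM
  | (k+2), C, M, hC, hC', hM => by
      refine ⟨mul_mem (mul_mem hC.1 hM.1) hC'.1, fun P hP => ?_⟩
      have hQ : star C * P * C ∈ Pauli n := by
        have := hC'.2 P hP
        rwa [star_star] at this
      have h3 := CH_conj (k+1) hC hC' (hM.2 _ hQ)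
      rw [conj_eq]
      exact h3

lemma mul_conj_eq {C M P : QMat n} :
    (C * M) * P * star (C * M) = C * (M * P * star M) * star C := by
  rw [star_mul]
  simp only [mul_assoc]

lemma CH2_mul_s3 {C D : QMat n} (hC : C ∈ CH n 2) (hD : D ∈ CH n 2) : C * D ∈ CH n 2 := by
  rw [CH2_def] at hC hD ⊢
  refine ⟨mul_mem hC.1 hD.1, fun P hP => ?_⟩
  rw [mul_conj_eq]
  exact hC.2 _ (hD.2 P hP)

lemma CH_left_mul_aux {C M : QMat n} (m : ℕ) (hC : C ∈ CH n 2)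
    (hM : M ∈ CH n (m+2)) : C * M ∈ CH n (m+2) := by
  refine ⟨mul_mem hC.1 hM.1, fun P hP => ?_⟩
  rw [mul_conj_eq]
  exact CH_conj (m+1) hC (CH2_star hC) (hM.2 P hP)

lemma CH_left_mul {C : QMat n} (hC : C ∈ CH n 2) (m : ℕ) (M : QMat n) :
    C * M ∈ CH n (m+2) ↔ M ∈ CH n (m+2) := by
  constructor
  · intro h
    have hM : M = star C * (C * M) := by
      rw [← mul_assoc, Matrix.mem_unitaryGroup_iff'.mp hC.1, one_mul]
    rw [hM]
    exact CH_left_mul_aux m (CH2_star hC) h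
  · exact CH_left_mul_aux m hC

end CHPaper

namespace CHPaper


/-- a diagonal gate in CH₃ with no support on the target wires T
of a permutation π can be ignored when determining whether π d is in level k;
moreover the stated commutator identity holds for every Pauli X string. -/
theorem diag_no_target_support_can_be_ignored {n : ℕ}
    (σ : Equiv.Perm (QState n)) (T : Finset (Fin n))
    (hT : ∀ (x : QState n) (i : Fin n), i ∉ T → σ x i = x i)
    (dT dTbar : QMat n)
    (hdT : dT.IsDiag) (hdTu : dT ∈ Matrix.unitaryGroup (QState n) ℂ)
    (hdTbar : dTbar.IsDiag) (hdTbaru : dTbar ∈ Matrix.unitaryGroup (QState n) ℂ)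
    (hsupp : ∀ x y : QState n, (∀ i : Fin n, i ∉ T → x i = y i) →
      dTbar x x = dTbar y y)
    (hdTbar3 : dTbar ∈ CH n 3) :
    (∀ k : ℕ, 3 ≤ k →
      (permMat σ * dT * dTbar ∈ CH n k ↔ permMat σ * dT ∈ CH n k)) ∧
    (∀ v : QState n,
      permMat σ * dT * dTbar * XStr v * dTbar⁻¹ * dT⁻¹ * (permMat σ)⁻¹ =
        (dTbar * XStr v * dTbar⁻¹ * XStr v) *
          (permMat σ * dT * XStr v * dT⁻¹ * (permMat σ)⁻¹)) := by

  -- basic facts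
  have lc : ∀ {A B : QMat n}, A * B = B * A → ∀ t : QMat n,
      A * (B * t) = B * (A * t) := by
    intro A B h t; rw [← mul_assoc, h, mul_assoc]
  have hBinv : dTbar⁻¹ = star dTbar := inv_of_unitary hdTbaru
  have hAinv : dT⁻¹ = star dT := inv_of_unitary hdTu
  have hBinvD : (dTbar⁻¹).IsDiag := by rw [hBinv]; exact diag_star_diag hdTbar
  have hAinvD : (dT⁻¹).IsDiag := by rw [hAinv]; exact diag_star_diag hdT
  have hσfix : ∀ (x : QState n) (i : Fin n), i ∉ T → σ⁻¹ x i = x i := by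
    intro x i hi
    have h := hT (σ⁻¹ x) i hi
    rw [show σ (σ⁻¹ x) = x from σ.apply_symm_apply x] at h
    exact h.symm
  have hsuppinv : ∀ x y : QState n, (∀ i : Fin n, i ∉ T → x i = y i) →
      dTbar⁻¹ x x = dTbar⁻¹ y y := by
    intro x y h
    rw [hBinv]
    simp only [Matrix.star_apply]
    rw [hsupp x y h]
  have cAB : dT * dTbar = dTbar * dT := diag_comm_s3 hdT hdTbar
  have cVB : permMat σ * dTbar = dTbar * permMat σ := by
    have h : permMat σ * Matrix.diagonal (Matrix.diag dTbar) =
        Matrix.diagonal (Matrix.diag dTbar) * permMat σ := by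
      rw [permMat_mul_diag]
      congr 1
      apply congrArg Matrix.diagonal
      funext x
      exact hsupp (σ⁻¹ x) x (fun i hi => hσfix x i hi)
    rwa [hdTbar.diagonal_diag] at h
  -- the generalized part-2 identity with an arbitrary tail
  have part2gen : ∀ (v : QState n) (t : QMat n),
      permMat σ * (dT * (dTbar * (XStr v * (dTbar⁻¹ * (dT⁻¹ * t))))) =
        dTbar * (XStr v * (dTbar⁻¹ * (XStr v *
          (permMat σ * (dT * (XStr v * (dT⁻¹ * t))))))) := by
    intro v t
    set D : QMat n := Matrix.diagonal (fun x => Matrix.diag dTbar⁻¹ (x + v)) with hD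
    have e1 : XStr v * dTbar⁻¹ = D * XStr v := by
      conv_lhs => rw [← hBinvD.diagonal_diag]
      rw [xstr_mul_diag]
    have e1c : ∀ s : QMat n, XStr v * (dTbar⁻¹ * s) = D * (XStr v * s) := by
      intro s; rw [← mul_assoc, e1, mul_assoc]
    have hXXc : ∀ s : QMat n, XStr v * (XStr v * s) = s := by
      intro s; rw [← mul_assoc, xstr_mul_self, one_mul]
    have cAD : dT * D = D * dT := diag_comm_s3 hdT (Matrix.isDiag_diagonal _)
    have cVD : permMat σ * D = D * permMat σ := by
      rw [hD, permMat_mul_diag]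
      congr 1
      apply congrArg Matrix.diagonal
      funext x
      exact hsuppinv (σ⁻¹ x + v) (x + v)
        (fun i hi => by
          show σ⁻¹ x i + v i = x i + v i
          rw [hσfix x i hi])
    simp only [e1c, hXXc, lc cAB, lc cAD, lc cVB, lc cVD]
  constructor
  · -- part 1
    intro k hk
    obtain ⟨m, rfl⟩ : ∃ m, k = m + 3 := ⟨k - 3, by omega⟩
    have hVstar : star (permMat σ) = (permMat σ)⁻¹ := by
      rw [star_permMat, permMat_inv]
    have hWu : permMat σ * dT ∈ Matrix.unitaryGroup (QState n) ℂ :=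
      mul_mem (permMat_mem σ) hdTu
    have hUu : permMat σ * dT * dTbar ∈ Matrix.unitaryGroup (QState n) ℂ :=
      mul_mem hWu hdTbaru
    have cZB : ∀ w : QState n, ZStr w * dTbar⁻¹ = dTbar⁻¹ * ZStr w :=
      fun w => diag_comm_s3 (zstr_isDiag w) hBinvD
    have cZA : ∀ w : QState n, ZStr w * dT⁻¹ = dT⁻¹ * ZStr w :=
      fun w => diag_comm_s3 (zstr_isDiag w) hAinvD
    have key : ∀ P ∈ Pauli n, ∃ C, C ∈ CH n 2 ∧
        (permMat σ * dT * dTbar) * P * star (permMat σ * dT * dTbar) =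
          C * ((permMat σ * dT) * P * star (permMat σ * dT)) := by
      rintro P ⟨c, v, w, hc, rfl⟩
      refine ⟨dTbar * XStr v * dTbar⁻¹ * XStr v, ?_, ?_⟩
      · apply CH2_mul_s3 _ (xstr_CH2 v)
        have h1 : dTbar * XStr v * star dTbar ∈ CH n 2 :=
          hdTbar3.2 (XStr v) (xstr_pauli v)
        rwa [← hBinv] at h1
      · have hmain : permMat σ * dT * dTbar * (XStr v * ZStr w) *
            (dTbar⁻¹ * (dT⁻¹ * (permMat σ)⁻¹)) =
            dTbar * XStr v * dTbar⁻¹ * XStr v *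
              (permMat σ * dT * (XStr v * ZStr w) * (dT⁻¹ * (permMat σ)⁻¹)) := by
          simp only [mul_assoc]
          simp only [lc (cZB w), lc (cZA w)]
          exact part2gen v (ZStr w * (permMat σ)⁻¹)
        simp only [star_mul, ← hBinv, ← hAinv, hVstar]
        simp only [Matrix.mul_smul, Matrix.smul_mul]
        rw [hmain]
    constructor
    · rintro ⟨_, h2⟩
      refine ⟨hWu, fun P hP => ?_⟩
      obtain ⟨C, hC, hid⟩ := key P hP
      have h3 := h2 P hP
      rw [hid] at h3
      exact (CH_left_mul hC m _).mp h3
    · rintro ⟨_, h2⟩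
      refine ⟨hUu, fun P hP => ?_⟩
      obtain ⟨C, hC, hid⟩ := key P hP
      rw [hid]
      exact (CH_left_mul hC m _).mpr (h2 P hP)
  · -- part 2
    intro v
    simp only [mul_assoc]
    exact part2gen v ((permMat σ)⁻¹)
end CHPaper
end
end

section
/- For every n and k, the chain of inclusions 𝒟ₖⁿ ⊆ Diagₖⁿ ⊆ 𝒟_{k+n}ⁿ ⊆ Diag_{k+n}ⁿ holds; in particular every 2ⁿ×2ⁿ diagonal matrix with 2ᵏ-th root-of-unity entries lies in the group of diagonal gates at level k+n of the Clifford Hierarchy. -/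
noncomputable section

namespace CHPaper

/-- Diag_r^n: diagonal matrices (top-left entry normalized to 1) whose entries
are 2^r-th roots of unity. -/
def Diagset (n r : ℕ) : Set (QMat n) :=
  {M | M.IsDiag ∧ M 0 0 = 1 ∧ ∀ x : QState n, (M x x) ^ (2 ^ r) = 1}
/-- The multi-controlled phase gate Λ^{|S|-1}(Z^{1/2^l}): applies the phase
exp(iπ/2^l) to basis states that are 1 on every qubit in S. -/
def MCphase {n : ℕ} (S : Finset (Fin n)) (l : ℕ) : QMat n :=
  Matrix.diagonal fun x =>
    if ∀ i ∈ S, x i = 1 then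
      Complex.exp (Complex.I * (Real.pi : ℂ) / 2 ^ l) else 1

/-- Generating set of 𝒟ₖⁿ: multi-controlled phase gates Λ^m(Z^{1/2^l}) with
l + m + 1 = l + |S| ≤ k (such a gate lies in level l + |S| of the Clifford
Hierarchy). -/
def DGen (n k : ℕ) : Set (QMat n) :=
  {M | ∃ (S : Finset (Fin n)) (l : ℕ), S.Nonempty ∧ l + S.card ≤ k ∧
    M = MCphase S l}

/-- 𝒟ₖⁿ, the group of n-qubit diagonal gates at level k of the Clifford
Hierarchy, generated by the multi-controlled phase gates (all generators have
finite order, so the monoid closure is a group). -/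
def DGroup (n k : ℕ) : Set (QMat n) :=
  (Submonoid.closure (DGen n k) : Submonoid (QMat n))
/-! ### Auxiliary machinery for the chain theorem -/

lemma exp_pow_two_pow {l r : ℕ} (h : l < r) :
    (Complex.exp (Complex.I * (Real.pi : ℂ) / 2 ^ l)) ^ (2 ^ r) = 1 := by
  have h2 : (2 : ℂ) ^ l ≠ 0 := pow_ne_zero _ two_ne_zero
  have h1 : (Complex.exp (Complex.I * (Real.pi : ℂ) / 2 ^ l)) ^ (2 ^ l) = -1 := by
    rw [← Complex.exp_nat_mul]
    rw [show ((2 ^ l : ℕ) : ℂ) * (Complex.I * (Real.pi : ℂ) / 2 ^ l)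
        = (Real.pi : ℂ) * Complex.I by push_cast; field_simp]
    exact Complex.exp_pi_mul_I
  have hsplit : 2 ^ r = 2 ^ l * 2 ^ (r - l) := by rw [← pow_add]; congr 1; omega
  rw [hsplit, pow_mul, h1]
  obtain ⟨t, ht⟩ : ∃ t, 2 ^ (r - l) = 2 * t :=
    ⟨2 ^ (r - l - 1), by rw [← pow_succ']; congr 1; omega⟩
  rw [ht, pow_mul]
  norm_num

/-- `Diagset n r` as a submonoid. -/
def DiagSubmonoid (n r : ℕ) : Submonoid (QMat n) where
  carrier := Diagset n r
  one_mem' := ⟨Matrix.isDiag_one, Matrix.one_apply_eq 0,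
    fun x => by rw [Matrix.one_apply_eq]; exact one_pow _⟩
  mul_mem' := by
    rintro A B ⟨hA1, hA2, hA3⟩ ⟨hB1, hB2, hB3⟩
    have hAB : ∀ x, (A * B) x x = A x x * B x x := by
      intro x
      conv_lhs => rw [← hA1.diagonal_diag, ← hB1.diagonal_diag]
      rw [Matrix.diagonal_mul_diagonal, Matrix.diagonal_apply_eq]
      rfl
    refine ⟨?_, ?_, ?_⟩
    · rw [← hA1.diagonal_diag, ← hB1.diagonal_diag, Matrix.diagonal_mul_diagonal]
      exact Matrix.isDiag_diagonal _
    · rw [hAB, hA2, hB2, one_mul]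
    · intro x; rw [hAB, mul_pow, hA3, hB3, one_mul]

lemma DGen_subset_Diagset (n r : ℕ) : DGen n r ⊆ Diagset n r := by
  rintro M ⟨S, l, hS, hlr, rfl⟩
  refine ⟨Matrix.isDiag_diagonal _, ?_, ?_⟩
  · rw [MCphase, Matrix.diagonal_apply_eq, if_neg]
    intro h
    obtain ⟨i, hi⟩ := hS
    have h01 : (0 : ZMod 2) ≠ 1 := by decide
    exact h01 (h i hi)
  · intro x
    rw [MCphase, Matrix.diagonal_apply_eq]
    split
    · exact exp_pow_two_pow (by have := Finset.card_pos.mpr hS; omega)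
    · exact one_pow _

lemma DGroup_subset_Diagset (n r : ℕ) : DGroup n r ⊆ Diagset n r := fun M hM =>
  (Submonoid.closure_le (S := DiagSubmonoid n r)).mpr (DGen_subset_Diagset n r) hM

/-- Support of a basis state. -/
def supp {n : ℕ} (x : QState n) : Finset (Fin n) :=
  Finset.univ.filter (fun i => x i = 1)

/-- Characteristic basis state of a set of qubits. -/
def chi {n : ℕ} (S : Finset (Fin n)) : QState n := fun i => if i ∈ S then 1 else 0

lemma chi_supp {n : ℕ} (x : QState n) : chi (supp x) = x := by
  funext i
  have h : x i = 0 ∨ x i = 1 := by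
    have : ∀ a : ZMod 2, a = 0 ∨ a = 1 := by decide
    exact this (x i)
  simp only [chi, supp, Finset.mem_filter, Finset.mem_univ, true_and]
  rcases h with h | h <;> simp [h]

lemma cond_iff_subset {n : ℕ} (S : Finset (Fin n)) (x : QState n) :
    (∀ i ∈ S, x i = 1) ↔ S ⊆ supp x := by
  simp [supp, Finset.subset_iff]

/-- Inclusion-exclusion style coefficients for a function on subsets. -/
def coeffs {n N : ℕ} (g : Finset (Fin n) → ZMod N) (S : Finset (Fin n)) : ZMod N :=
  g S - ∑ T ∈ (S.powerset.erase S).attach, coeffs g T.1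
termination_by S.card
decreasing_by
  have h1 := Finset.mem_erase.mp T.2
  exact Finset.card_lt_card (lt_of_le_of_ne (Finset.mem_powerset.mp h1.2) h1.1)

lemma sum_coeffs {n N : ℕ} (g : Finset (Fin n) → ZMod N) (S : Finset (Fin n)) :
    ∑ T ∈ S.powerset, coeffs g T = g S := by
  rw [← Finset.add_sum_erase _ _ (Finset.mem_powerset_self S)]
  rw [coeffs, Finset.sum_attach]
  ring

lemma diag_prod_mem {n : ℕ} (r l : ℕ)
    (hl : ∀ S : Finset (Fin n), S.Nonempty → l + S.card ≤ r)
    (e : Finset (Fin n) → ℕ) (he : e ∅ = 0) (F : Finset (Finset (Fin n))) :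
    Matrix.diagonal (fun x => ∏ S ∈ F,
      (if ∀ i ∈ S, x i = 1 then Complex.exp (Complex.I * (Real.pi : ℂ) / 2 ^ l)
        else 1) ^ e S)
      ∈ Submonoid.closure (DGen n r) := by
  classical
  induction F using Finset.induction with
  | empty =>
    have : (Matrix.diagonal (fun _ : QState n => (1 : ℂ))) = 1 := Matrix.diagonal_one
    simpa using Submonoid.one_mem _
  | insert S F hS ih =>
    have hfun : (fun x : QState n => ∏ S' ∈ insert S F,
        (if ∀ i ∈ S', x i = 1 then Complex.exp (Complex.I * (Real.pi : ℂ) / 2 ^ l)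
          else 1) ^ e S')
        = (fun x : QState n =>
            ((if ∀ i ∈ S, x i = 1 then Complex.exp (Complex.I * (Real.pi : ℂ) / 2 ^ l)
              else 1) ^ e S) *
            ∏ S' ∈ F, (if ∀ i ∈ S', x i = 1 then
              Complex.exp (Complex.I * (Real.pi : ℂ) / 2 ^ l) else 1) ^ e S') := by
      funext x
      exact Finset.prod_insert hS
    rw [hfun, show (Matrix.diagonal fun x : QState n =>
        ((if ∀ i ∈ S, x i = 1 then Complex.exp (Complex.I * (Real.pi : ℂ) / 2 ^ l)
          else 1) ^ e S) *
        ∏ S' ∈ F, (if ∀ i ∈ S', x i = 1 then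
          Complex.exp (Complex.I * (Real.pi : ℂ) / 2 ^ l) else 1) ^ e S')
      = (MCphase S l) ^ e S * Matrix.diagonal (fun x : QState n =>
        ∏ S' ∈ F, (if ∀ i ∈ S', x i = 1 then
          Complex.exp (Complex.I * (Real.pi : ℂ) / 2 ^ l) else 1) ^ e S') by
        rw [MCphase, Matrix.diagonal_pow, Matrix.diagonal_mul_diagonal]; rfl]
    refine Submonoid.mul_mem _ ?_ ih
    rcases S.eq_empty_or_nonempty with hSe | hSne
    · rw [hSe, he, pow_zero]; exact Submonoid.one_mem _
    · exact Submonoid.pow_mem _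
        (Submonoid.subset_closure
          (show MCphase S l ∈ DGen n r from ⟨S, l, hSne, hl S hSne, rfl⟩)) _

lemma Diagset_subset_DGroup (n k : ℕ) : Diagset n k ⊆ DGroup n (k + n) := by
  classical
  rintro M ⟨h1, h2, h3⟩
  have hMdiag : Matrix.diagonal M.diag = M := h1.diagonal_diag
  cases k with
  | zero =>
    have hM1 : M = 1 := by
      rw [← hMdiag]
      have hd : M.diag = fun _ => 1 := funext fun x => by simpa using h3 x
      rw [hd]; exact Matrix.diagonal_one
    rw [hM1]
    exact Submonoid.one_mem _
  | succ l =>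
    set ζ : ℂ := Complex.exp (Complex.I * (Real.pi : ℂ) / 2 ^ l) with hζ
    have hN : (2 : ℕ) ^ (l + 1) ≠ 0 := by positivity
    haveI : NeZero ((2 : ℕ) ^ (l + 1)) := ⟨hN⟩
    have hprim : IsPrimitiveRoot ζ (2 ^ (l + 1)) := by
      have hh := Complex.isPrimitiveRoot_exp (2 ^ (l + 1)) hN
      have : (2 * (Real.pi : ℂ) * Complex.I / ((2 : ℕ) ^ (l + 1) : ℕ))
          = Complex.I * (Real.pi : ℂ) / 2 ^ l := by
        push_cast
        rw [pow_succ]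
        field_simp
      rwa [this] at hh
    have hζ1 : ζ ^ ((2 : ℕ) ^ (l + 1)) = 1 := hprim.pow_eq_one
    have hpowmod : ∀ m : ℕ, ζ ^ m = ζ ^ (m % 2 ^ (l + 1)) := by
      intro m
      conv_lhs => rw [← Nat.div_add_mod m (2 ^ (l + 1))]
      rw [pow_add, pow_mul, hζ1, one_pow, one_mul]
    have hval : ∀ a b : ZMod (2 ^ (l + 1)), ζ ^ (a + b).val = ζ ^ a.val * ζ ^ b.val := by
      intro a b
      rw [← pow_add, ZMod.val_add, ← hpowmod]
    have hex : ∀ x : QState n, ∃ m : ℕ, ζ ^ m = M x x := by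
      intro x
      obtain ⟨i, _, hi⟩ := hprim.eq_pow_of_pow_eq_one (h3 x)
      exact ⟨i, hi⟩
    set g : Finset (Fin n) → ZMod (2 ^ (l + 1)) :=
      fun S => ((hex (chi S)).choose : ZMod (2 ^ (l + 1))) with hg
    have hgval : ∀ S, ζ ^ (g S).val = M (chi S) (chi S) := by
      intro S
      rw [hg]
      simp only []
      rw [ZMod.val_natCast, ← hpowmod]
      exact (hex (chi S)).choose_spec
    set c := coeffs g with hc
    have hchi0 : chi (∅ : Finset (Fin n)) = (0 : QState n) := funext fun i => by simp [chi]
    have hg0 : g ∅ = 0 := by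
      have h := hgval ∅
      rw [hchi0, h2] at h
      have hdvd := (hprim.pow_eq_one_iff_dvd _).mp h
      have hlt := ZMod.val_lt (g ∅)
      have hv0 : (g ∅).val = 0 := Nat.eq_zero_of_dvd_of_lt hdvd hlt
      exact (ZMod.val_eq_zero _).mp hv0
    have hc0 : c ∅ = 0 := by
      rw [hc, coeffs, Finset.sum_attach, hg0]
      simp
    have hprodsum : ∀ P : Finset (Finset (Fin n)),
        ∏ S ∈ P, ζ ^ (c S).val = ζ ^ ((∑ S ∈ P, c S).val) := by
      intro P
      induction P using Finset.induction with
      | empty => simp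
      | insert S P hS ih =>
        rw [Finset.prod_insert hS, Finset.sum_insert hS, hval, ih]
    have hkey : ∀ x : QState n, M x x = ∏ S ∈ (Finset.univ : Finset (Finset (Fin n))),
        (if ∀ i ∈ S, x i = 1 then ζ else 1) ^ (c S).val := by
      intro x
      have step1 : ∏ S ∈ (Finset.univ : Finset (Finset (Fin n))),
          (if ∀ i ∈ S, x i = 1 then ζ else 1) ^ (c S).val
          = ∏ S ∈ (Finset.univ : Finset (Finset (Fin n))),
            (if S ⊆ supp x then ζ ^ (c S).val else 1) := by
        refine Finset.prod_congr rfl fun S _ => ?_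
        by_cases h : S ⊆ supp x
        · rw [if_pos ((cond_iff_subset S x).mpr h), if_pos h]
        · rw [if_neg (fun hh => h ((cond_iff_subset S x).mp hh)), if_neg h, one_pow]
      rw [step1, ← Finset.prod_filter]
      have step3 : (Finset.univ : Finset (Finset (Fin n))).filter (· ⊆ supp x)
          = (supp x).powerset := by
        ext T; simp [Finset.mem_powerset]
      rw [step3, hprodsum, sum_coeffs, hgval, chi_supp]
    have key : M = Matrix.diagonal (fun x => ∏ S ∈ (Finset.univ : Finset (Finset (Fin n))),
        (if ∀ i ∈ S, x i = 1 then ζ else 1) ^ (c S).val) := by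
      have hdiag : M.diag = fun x => ∏ S ∈ (Finset.univ : Finset (Finset (Fin n))),
          (if ∀ i ∈ S, x i = 1 then ζ else 1) ^ (c S).val := funext fun x => hkey x
      rw [← hMdiag, hdiag]
    rw [key]
    show _ ∈ (Submonoid.closure (DGen n (l + 1 + n)) : Submonoid (QMat n))
    rw [hζ]
    exact diag_prod_mem (l + 1 + n) l
      (fun S _ => by
        have hcard : S.card ≤ n := by simpa using Finset.card_le_univ S
        omega)
      (fun S => (c S).val)
      (by show (c ∅).val = 0; rw [hc0]; exact ZMod.val_zero) Finset.univ

/-- the chain of inclusions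
𝒟ₖⁿ ⊆ Diagₖⁿ ⊆ 𝒟_{k+n}ⁿ ⊆ Diag_{k+n}ⁿ. -/
theorem DGroup_Diagset_chain (n k : ℕ) :
    DGroup n k ⊆ Diagset n k ∧
    Diagset n k ⊆ DGroup n (k + n) ∧
    DGroup n (k + n) ⊆ Diagset n (k + n) :=
  ⟨DGroup_subset_Diagset n k, Diagset_subset_DGroup n k,
    DGroup_subset_Diagset n (k + n)⟩

end CHPaper
end
end
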